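/- arXiv:2403.17777 — 2 statements merged into one kernel-verified Lean document; each statement's English description precedes it below -/
import Mathlib

section
/- Let F be an absolutely continuous distribution supported on [0,∞) with inf of support equal to 0. Define the conditional distribution of the s-th order statistic given the cumulative event {ε₍ᵣ₎ ≤ y}: F₍ₛ|ᵣ₎(x; y) = F₍ᵣ,ₛ₎(y,x)/F₍ᵣ₎(y) for y > 0. Then for every x, lim_{y↓0} F₍ₛ|ᵣ₎(x; y) = F_{s−r:n−r}(x), the distribution function of the (s−r)-th order statistic of a sample of size n−r from F. -/
open MeasureTheory ProbabilityTheory Real Set Filter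

/-- The `j`-th (1-based) smallest order statistic of a finite family of reals. -/
noncomputable def orderStat {n : ℕ} (x : Fin n → ℝ) (j : ℕ) : ℝ :=
  ((Multiset.map x (Finset.univ.val : Multiset (Fin n))).sort (· ≤ ·)).getD (j - 1) 0


lemma sorted_getD_le_iff (l : List ℝ) (hl : l.Pairwise (· ≤ ·)) (j : ℕ) (hj1 : 1 ≤ j)
    (hjn : j ≤ l.length) (t : ℝ) :
    l.getD (j - 1) 0 ≤ t ↔ j ≤ l.countP (fun a => decide (a ≤ t)) := by
  have hidx : j - 1 < l.length := by omega
  rw [l.getD_eq_getElem 0 hidx]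
  constructor
  · intro h
    have hlen : (l.take j).length = j := by simp [min_eq_left hjn]
    have hcount : (l.take j).countP (fun a => decide (a ≤ t)) = j := by
      rw [List.countP_eq_length.mpr, hlen]
      intro a ha
      obtain ⟨i, hi, rfl⟩ := List.getElem_of_mem ha
      rw [List.getElem_take]
      simp only [decide_eq_true_eq]
      refine le_trans ?_ h
      have := hl.rel_get_of_le (a := ⟨i, by omega⟩) (b := ⟨j - 1, hidx⟩)
        (by simp [Fin.le_def]; omega)
      simpa [List.get_eq_getElem] using this
    calc j = (l.take j).countP _ := hcount.symm
      _ ≤ l.countP (fun a => decide (a ≤ t)) := by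
          conv_rhs => rw [← List.take_append_drop j l]
          rw [List.countP_append]; omega
  · intro h
    by_contra hc
    push_neg at hc
    have hdrop : (l.drop (j-1)).countP (fun a => decide (a ≤ t)) = 0 := by
      rw [List.countP_eq_zero]
      intro a ha
      obtain ⟨i, hi, rfl⟩ := List.getElem_of_mem ha
      rw [List.getElem_drop]
      simp only [decide_eq_true_eq, not_le]
      refine lt_of_lt_of_le hc ?_
      have := hl.rel_get_of_le (a := ⟨j - 1, hidx⟩) (b := ⟨j - 1 + i, by
        have := List.length_drop (i := j-1) (l := l); omega⟩) (by simp [Fin.le_def])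
      simpa [List.get_eq_getElem] using this
    have htake : (l.take (j-1)).countP (fun a => decide (a ≤ t)) ≤ j - 1 := by
      refine le_trans (List.countP_le_length) ?_
      simp [List.length_take]
    have : l.countP (fun a => decide (a ≤ t)) ≤ j - 1 := by
      conv_lhs => rw [← List.take_append_drop (j-1) l]
      rw [List.countP_append]; omega
    omega

lemma orderStat_le_iff {n : ℕ} (x : Fin n → ℝ) {j : ℕ} (hj1 : 1 ≤ j) (hjn : j ≤ n) (t : ℝ) :
    orderStat x j ≤ t ↔ j ≤ (Finset.univ.filter (fun i => x i ≤ t)).card := by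
  set M : Multiset ℝ := Multiset.map x (Finset.univ.val : Multiset (Fin n))
  have hlen : (M.sort (· ≤ ·)).length = n := by
    simp [M, Multiset.length_sort]
  rw [orderStat, sorted_getD_le_iff _ (Multiset.pairwise_sort _ _) j hj1 (by rw [hlen]; exact hjn)]
  have key : (M.sort (· ≤ ·)).countP (fun a => decide (a ≤ t)) = (Finset.univ.filter (fun i => x i ≤ t)).card := by
    have hco : ((M.sort (· ≤ ·)) : Multiset ℝ) = M := Multiset.sort_eq _ _
    calc (M.sort (· ≤ ·)).countP (fun a => decide (a ≤ t))
      = Multiset.countP (fun a => a ≤ t) M := by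
          rw [← Multiset.coe_countP, hco]
      _ = (Finset.univ.filter (fun i => x i ≤ t)).card := by
          rw [Multiset.countP_map]; rfl
  rw [key]

/-- Bins for the three-way split at `y ≤ x`. -/
def binSet {n : ℕ} (y x : ℝ) (ST : Finset (Fin n) × Finset (Fin n)) (i : Fin n) : Set ℝ :=
  if i ∈ ST.1 then Set.Iic y else if i ∈ ST.2 then Set.Ioc y x else Set.Ioi x

lemma binSet_measurable {n : ℕ} (y x : ℝ) (ST : Finset (Fin n) × Finset (Fin n)) (i : Fin n) :
    MeasurableSet (binSet y x ST i) := by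
  unfold binSet; split_ifs <;> measurability

lemma key_pattern {n : ℕ} {Ω : Type*} (ε : Fin n → Ω → ℝ) {y x : ℝ} (hyx : y ≤ x) (ω : Ω)
    (ST : Finset (Fin n) × Finset (Fin n)) (hsub : ST.1 ⊆ ST.2)
    (hω : ∀ i, ε i ω ∈ binSet y x ST i) :
    ST.1 = Finset.univ.filter (fun i => ε i ω ≤ y) ∧
      ST.2 = Finset.univ.filter (fun i => ε i ω ≤ x) := by
  constructor
  · ext i
    have h := hω i
    simp only [Finset.mem_filter, Finset.mem_univ, true_and]
    by_cases h1 : i ∈ ST.1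
    · simp only [binSet, if_pos h1, Set.mem_Iic] at h
      simp [h1, h]
    · simp only [binSet, if_neg h1] at h
      by_cases h2 : i ∈ ST.2
      · simp only [if_pos h2, Set.mem_Ioc] at h
        simp [h1, not_le.mpr h.1]
      · simp only [if_neg h2, Set.mem_Ioi] at h
        simp [h1, not_le.mpr (lt_of_le_of_lt hyx h)]
  · ext i
    have h := hω i
    simp only [Finset.mem_filter, Finset.mem_univ, true_and]
    by_cases h1 : i ∈ ST.1
    · simp only [binSet, if_pos h1, Set.mem_Iic] at h
      simp [hsub h1, le_trans h hyx]
    · simp only [binSet, if_neg h1] at h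
      by_cases h2 : i ∈ ST.2
      · simp only [if_pos h2, Set.mem_Ioc] at h
        simp [h2, h.2]
      · simp only [if_neg h2, Set.mem_Ioi] at h
        simp [h2, not_le.mpr h]

lemma decomp {n : ℕ} {Ω : Type*} [MeasurableSpace Ω] (μ : Measure Ω) [IsProbabilityMeasure μ]
    (ν : Measure ℝ) (ε : Fin n → Ω → ℝ) (hmeas : ∀ i, Measurable (ε i))
    (hindep : iIndepFun ε μ)
    (hdist : ∀ i, Measure.map (ε i) μ = ν)
    {y x : ℝ} (hyx : y ≤ x) (P₁ P₂ : ℕ → Prop) [DecidablePred P₁] [DecidablePred P₂] :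
    μ {ω | P₁ (Finset.univ.filter (fun i => ε i ω ≤ y)).card ∧
            P₂ (Finset.univ.filter (fun i => ε i ω ≤ x)).card}
      = ∑ ST ∈ Finset.univ.filter
          (fun ST : Finset (Fin n) × Finset (Fin n) =>
            ST.1 ⊆ ST.2 ∧ P₁ ST.1.card ∧ P₂ ST.2.card),
          ∏ i, ν (binSet y x ST i) := by
  classical
  set D := Finset.univ.filter
      (fun ST : Finset (Fin n) × Finset (Fin n) =>
        ST.1 ⊆ ST.2 ∧ P₁ ST.1.card ∧ P₂ ST.2.card) with hD
  have hset : {ω | P₁ (Finset.univ.filter (fun i => ε i ω ≤ y)).card ∧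
      P₂ (Finset.univ.filter (fun i => ε i ω ≤ x)).card}
      = ⋃ ST ∈ D, ⋂ i, ε i ⁻¹' binSet y x ST i := by
    ext ω
    simp only [Set.mem_setOf_eq, Set.mem_iUnion, Set.mem_iInter, Set.mem_preimage]
    constructor
    · rintro ⟨h1, h2⟩
      refine ⟨(Finset.univ.filter (fun i => ε i ω ≤ y),
        Finset.univ.filter (fun i => ε i ω ≤ x)), ?_, ?_⟩
      · simp only [hD, Finset.mem_filter, Finset.mem_univ, true_and]
        refine ⟨fun i hi => ?_, h1, h2⟩
        simp only [Finset.mem_filter] at hi ⊢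
        exact ⟨hi.1, le_trans hi.2 hyx⟩
      · intro i
        by_cases hy' : ε i ω ≤ y
        · simp [binSet, hy', Finset.mem_filter]
        · by_cases hx' : ε i ω ≤ x
          · simp [binSet, hy', hx', Finset.mem_filter, lt_of_not_ge hy']
          · simp [binSet, hy', hx', Finset.mem_filter, lt_of_not_ge hx']
    · rintro ⟨ST, hST, hω⟩
      simp only [hD, Finset.mem_filter, Finset.mem_univ, true_and] at hST
      obtain ⟨hsub, hP1, hP2⟩ := hST
      obtain ⟨e1, e2⟩ := key_pattern ε hyx ω ST hsub hω
      rw [← e1, ← e2]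
      exact ⟨hP1, hP2⟩
  rw [hset, measure_biUnion_finset ?hd ?hm]
  · refine Finset.sum_congr rfl (fun ST _ => ?_)
    have h1 : (⋂ i ∈ (Finset.univ : Finset (Fin n)), ε i ⁻¹' binSet y x ST i)
        = ⋂ i, ε i ⁻¹' binSet y x ST i := by simp
    rw [← h1, hindep.measure_inter_preimage_eq_mul Finset.univ
      (fun i _ => binSet_measurable y x ST i)]
    refine Finset.prod_congr rfl (fun i _ => ?_)
    rw [← hdist i, Measure.map_apply (hmeas i) (binSet_measurable y x ST i)]
  case hd =>
    intro a ha b hb hab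
    simp only [hD, Finset.coe_filter, Set.mem_setOf_eq, Finset.mem_univ, true_and] at ha hb
    rw [Function.onFun]
    rw [Set.disjoint_left]
    intro ω hωa hωb
    simp only [Set.mem_iInter, Set.mem_preimage] at hωa hωb
    obtain ⟨a1, a2⟩ := key_pattern ε hyx ω a ha.1 hωa
    obtain ⟨b1, b2⟩ := key_pattern ε hyx ω b hb.1 hωb
    exact hab (Prod.ext (a1.trans b1.symm) (a2.trans b2.symm))
  case hm =>
    intro ST _
    exact MeasurableSet.iInter (fun i => (hmeas i) (binSet_measurable y x ST i))

lemma comb (n r : ℕ) (q t : ℝ) (P : ℕ → Prop) [DecidablePred P] :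
    ∑ ST ∈ Finset.univ.filter
        (fun ST : Finset (Fin n) × Finset (Fin n) =>
          ST.1 ⊆ ST.2 ∧ ST.1.card = r ∧ P ST.2.card),
      ∏ i ∈ ST.1ᶜ, (if i ∈ ST.2 then q else t)
    = (n.choose r : ℝ) * ∑ k ∈ (Finset.range (n - r + 1)).filter (fun k => P (r + k)),
        ((n - r).choose k : ℝ) * q ^ k * t ^ (n - r - k) := by
  classical
  rw [Finset.sum_filter, Fintype.sum_prod_type]
  have step1 : ∀ S : Finset (Fin n),
      (∑ T : Finset (Fin n), if S ⊆ T ∧ S.card = r ∧ P T.card then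
        ∏ i ∈ Sᶜ, (if i ∈ T then q else t) else 0)
      = if S.card = r then
          (∑ k ∈ (Finset.range (n - r + 1)).filter (fun k => P (r + k)),
            ((n - r).choose k : ℝ) * q ^ k * t ^ (n - r - k)) else 0 := by
    intro S
    by_cases hS : S.card = r
    · rw [if_pos hS]
      have hSc : Sᶜ.card = n - r := by
        rw [Finset.card_compl, hS]; simp
      -- reduce to a sum over subsets of Sᶜ
      have e1 : (∑ T : Finset (Fin n), if S ⊆ T ∧ S.card = r ∧ P T.card then
          ∏ i ∈ Sᶜ, (if i ∈ T then q else t) else 0)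
          = ∑ T ∈ Finset.univ.filter (fun T => S ⊆ T ∧ P T.card),
              ∏ i ∈ Sᶜ, (if i ∈ T then q else t) := by
        rw [Finset.sum_filter]
        refine Finset.sum_congr rfl (fun T _ => ?_)
        by_cases h : S ⊆ T ∧ P T.card
        · rw [if_pos ⟨h.1, hS, h.2⟩, if_pos h]
        · rw [if_neg (fun hh => h ⟨hh.1, hh.2.2⟩), if_neg h]
      rw [e1]
      have e2 : ∑ T ∈ Finset.univ.filter (fun T => S ⊆ T ∧ P T.card),
            ∏ i ∈ Sᶜ, (if i ∈ T then q else t)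
          = ∑ U ∈ Sᶜ.powerset.filter (fun U => P (r + U.card)),
              ∏ i ∈ Sᶜ, (if i ∈ U then q else t) := by
        refine Finset.sum_nbij' (fun T => T \ S) (fun U => S ∪ U) ?_ ?_ ?_ ?_ ?_
        · intro T hT
          simp only [Finset.mem_filter, Finset.mem_univ, true_and] at hT
          simp only [Finset.mem_filter, Finset.mem_powerset]
          constructor
          · intro i hi
            simp only [Finset.mem_sdiff] at hi
            simp [hi.2]
          · have : (T \ S).card = T.card - r := by
              rw [Finset.card_sdiff_of_subset hT.1, hS]
            rw [this]
            have hle : r ≤ T.card := hS ▸ Finset.card_le_card hT.1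
            have : r + (T.card - r) = T.card := by omega
            rw [this]
            exact hT.2
        · intro U hU
          simp only [Finset.mem_filter, Finset.mem_powerset] at hU
          simp only [Finset.mem_filter, Finset.mem_univ, true_and]
          have hdisj : Disjoint S U := by
            rw [Finset.disjoint_left]
            intro i hiS hiU
            have := hU.1 hiU
            simp only [Finset.mem_compl] at this
            exact this hiS
          constructor
          · exact Finset.subset_union_left
          · rw [Finset.card_union_of_disjoint hdisj, hS]
            exact hU.2
        · intro T hT
          simp only [Finset.mem_filter, Finset.mem_univ, true_and] at hT
          exact Finset.union_sdiff_of_subset hT.1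
        · intro U hU
          simp only [Finset.mem_filter, Finset.mem_powerset] at hU
          apply Finset.union_sdiff_cancel_left
          rw [Finset.disjoint_left]
          intro i hiS hiU
          have := hU.1 hiU
          simp only [Finset.mem_compl] at this
          exact this hiS
        · intro T hT
          simp only [Finset.mem_filter, Finset.mem_univ, true_and] at hT
          refine Finset.prod_congr rfl (fun i hi => ?_)
          simp only [Finset.mem_compl] at hi
          by_cases hiT : i ∈ T
          · rw [if_pos hiT, if_pos (by simp [Finset.mem_sdiff, hiT, hi])]
          · rw [if_neg hiT, if_neg (by simp [Finset.mem_sdiff, hiT])]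
      rw [e2]
      have e3 : ∀ U ∈ Sᶜ.powerset,
          (∏ i ∈ Sᶜ, (if i ∈ U then q else t)) = q ^ U.card * t ^ (n - r - U.card) := by
        intro U hU
        rw [Finset.mem_powerset] at hU
        have hsplit : Sᶜ = U ∪ (Sᶜ \ U) := (Finset.union_sdiff_of_subset hU).symm
        rw [hsplit, Finset.prod_union Finset.disjoint_sdiff]
        have h1 : ∏ i ∈ U, (if i ∈ U then q else t) = q ^ U.card := by
          rw [Finset.prod_congr rfl (fun i hi => if_pos hi), Finset.prod_const]
        have h2 : ∏ i ∈ Sᶜ \ U, (if i ∈ U then q else t) = t ^ (n - r - U.card) := by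
          rw [Finset.prod_congr rfl (fun i hi => if_neg (Finset.mem_sdiff.mp hi).2),
            Finset.prod_const, Finset.card_sdiff_of_subset hU, hSc]
        rw [h1, h2]
      have e4 : ∑ U ∈ Sᶜ.powerset.filter (fun U => P (r + U.card)),
            ∏ i ∈ Sᶜ, (if i ∈ U then q else t)
          = ∑ U ∈ Sᶜ.powerset.filter (fun U => P (r + U.card)),
              q ^ U.card * t ^ (n - r - U.card) :=
        Finset.sum_congr rfl (fun U hU => e3 U (Finset.mem_filter.mp hU).1)
      rw [e4, Finset.sum_filter, Finset.sum_powerset, hSc, Finset.sum_filter]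
      refine Finset.sum_congr rfl (fun k hk => ?_)
      have hinner : ∀ U ∈ Finset.powersetCard k Sᶜ,
          (if P (r + U.card) then q ^ U.card * t ^ (n - r - U.card) else (0:ℝ))
          = if P (r + k) then q ^ k * t ^ (n - r - k) else 0 := by
        intro U hU
        rw [(Finset.mem_powersetCard.mp hU).2]
      rw [Finset.sum_congr rfl hinner, Finset.sum_const, Finset.card_powersetCard, hSc,
        nsmul_eq_mul]
      by_cases h : P (r + k)
      · rw [if_pos h, if_pos h]
        ring
      · rw [if_neg h, if_neg h, mul_zero]
    · rw [if_neg hS]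
      refine Finset.sum_eq_zero (fun T _ => ?_)
      rw [if_neg (fun h => hS h.2.1)]
  rw [Finset.sum_congr rfl (fun S _ => step1 S)]
  rw [← Finset.sum_filter]
  rw [Finset.sum_const]
  have hcard : (Finset.univ.filter (fun S : Finset (Fin n) => S.card = r)).card
      = n.choose r := by
    have : Finset.univ.filter (fun S : Finset (Fin n) => S.card = r)
        = Finset.powersetCard r Finset.univ := by
      rw [Finset.powersetCard_eq_filter, Finset.powerset_univ]
    rw [this, Finset.card_powersetCard]
    simp
  rw [hcard, nsmul_eq_mul]

noncomputable def Gfun (n r : ℕ) (P : ℕ → Prop) [DecidablePred P] (pq : ℝ × ℝ) : ℝ :=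
  ∑ ST ∈ Finset.univ.filter
      (fun ST : Finset (Fin n) × Finset (Fin n) =>
        ST.1 ⊆ ST.2 ∧ r ≤ ST.1.card ∧ P ST.2.card),
    pq.1 ^ (ST.1.card - r) *
      ∏ i ∈ ST.1ᶜ, (if i ∈ ST.2 then pq.2 else 1 - pq.1 - pq.2)

lemma Gfun_eval0 (n r : ℕ) (P : ℕ → Prop) [DecidablePred P] (q : ℝ) :
    Gfun n r P (0, q) = (n.choose r : ℝ) *
      ∑ k ∈ (Finset.range (n - r + 1)).filter (fun k => P (r + k)),
        ((n - r).choose k : ℝ) * q ^ k * (1 - q) ^ (n - r - k) := by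
  classical
  unfold Gfun
  have h1 : ∀ ST ∈ Finset.univ.filter
      (fun ST : Finset (Fin n) × Finset (Fin n) =>
        ST.1 ⊆ ST.2 ∧ r ≤ ST.1.card ∧ P ST.2.card),
      ((0:ℝ), q).1 ^ (ST.1.card - r) *
        ∏ i ∈ ST.1ᶜ, (if i ∈ ST.2 then ((0:ℝ), q).2 else 1 - ((0:ℝ), q).1 - ((0:ℝ), q).2)
      = if ST.1.card = r then
          ∏ i ∈ ST.1ᶜ, (if i ∈ ST.2 then q else 1 - q) else 0 := by
    intro ST hST
    simp only [Finset.mem_filter, Finset.mem_univ, true_and] at hST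
    have hq : (1:ℝ) - (0:ℝ) - q = 1 - q := by ring
    simp only [hq]
    rw [zero_pow_eq]
    by_cases h : ST.1.card = r
    · rw [if_pos (by omega), if_pos h, one_mul]
    · rw [if_neg (by omega), if_neg h, zero_mul]
  rw [Finset.sum_congr rfl h1, Finset.sum_ite, Finset.sum_const_zero, add_zero,
    Finset.filter_filter]
  have h2 : Finset.univ.filter
      (fun ST : Finset (Fin n) × Finset (Fin n) =>
        (ST.1 ⊆ ST.2 ∧ r ≤ ST.1.card ∧ P ST.2.card) ∧ ST.1.card = r)
      = Finset.univ.filter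
        (fun ST : Finset (Fin n) × Finset (Fin n) =>
          ST.1 ⊆ ST.2 ∧ ST.1.card = r ∧ P ST.2.card) := by
    apply Finset.filter_congr
    intro ST _
    constructor
    · rintro ⟨⟨h1, _, h3⟩, h4⟩; exact ⟨h1, h4, h3⟩
    · rintro ⟨h1, h2, h3⟩; exact ⟨⟨h1, h2.ge, h3⟩, h2⟩
  rw [h2, comb]

lemma Gfun_continuous (n r : ℕ) (P : ℕ → Prop) [DecidablePred P] :
    Continuous (Gfun n r P) := by
  unfold Gfun
  refine continuous_finset_sum _ (fun ST _ => ?_)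
  refine (continuous_fst.pow _).mul (continuous_finset_prod _ (fun i _ => ?_))
  by_cases h : i ∈ ST.2
  · simp only [if_pos h]
    exact continuous_snd
  · simp only [if_neg h]
    exact (continuous_const.sub continuous_fst).sub continuous_snd

lemma measure_toReal {n : ℕ} {Ω : Type*} [MeasurableSpace Ω] (μ : Measure Ω)
    [IsProbabilityMeasure μ]
    (ν : Measure ℝ) [IsProbabilityMeasure ν] (ε : Fin n → Ω → ℝ)
    (hmeas : ∀ i, Measurable (ε i))
    (hindep : iIndepFun ε μ)
    (hdist : ∀ i, Measure.map (ε i) μ = ν)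
    (r : ℕ) {y x : ℝ} (hyx : y ≤ x) (P : ℕ → Prop) [DecidablePred P] :
    (μ {ω | r ≤ (Finset.univ.filter (fun i => ε i ω ≤ y)).card ∧
        P (Finset.univ.filter (fun i => ε i ω ≤ x)).card}).toReal
      = (ν (Set.Iic y)).toReal ^ r *
          Gfun n r P ((ν (Set.Iic y)).toReal,
            (ν (Set.Iic x)).toReal - (ν (Set.Iic y)).toReal) := by
  classical
  set p : ℝ := (ν (Set.Iic y)).toReal with hp
  set Fx : ℝ := (ν (Set.Iic x)).toReal with hFx
  have hIoc : (ν (Set.Ioc y x)).toReal = Fx - p := by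
    have hun : ν (Set.Iic y) + ν (Set.Ioc y x) = ν (Set.Iic x) := by
      rw [← measure_union (Set.Iic_disjoint_Ioc le_rfl) measurableSet_Ioc,
        Set.Iic_union_Ioc_eq_Iic hyx]
    have := congrArg ENNReal.toReal hun
    rw [ENNReal.toReal_add (measure_ne_top ν _) (measure_ne_top ν _)] at this
    rw [hp, hFx]; linarith
  have hIoi : (ν (Set.Ioi x)).toReal = 1 - Fx := by
    have hun : ν (Set.Iic x) + ν (Set.Ioi x) = 1 := by
      rw [← Set.compl_Iic, measure_add_measure_compl measurableSet_Iic]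
      exact measure_univ
    have := congrArg ENNReal.toReal hun
    rw [ENNReal.toReal_add (measure_ne_top ν _) (measure_ne_top ν _), ENNReal.toReal_one] at this
    rw [hFx]; linarith
  rw [decomp μ ν ε hmeas hindep hdist hyx (fun a => r ≤ a) P]
  rw [ENNReal.toReal_sum (fun ST _ => (ENNReal.prod_lt_top (fun i _ => measure_lt_top ν _)).ne)]
  unfold Gfun
  rw [Finset.mul_sum]
  refine Finset.sum_congr rfl (fun ST hST => ?_)
  simp only [Finset.mem_filter, Finset.mem_univ, true_and] at hST
  obtain ⟨hsub, hrc, _⟩ := hST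
  rw [ENNReal.toReal_prod]
  rw [← Finset.prod_mul_prod_compl ST.1]
  have h1 : ∏ i ∈ ST.1, (ν (binSet y x ST i)).toReal = p ^ ST.1.card := by
    rw [Finset.prod_congr rfl (fun i hi => by rw [binSet, if_pos hi]), Finset.prod_const]
  have h2 : ∏ i ∈ ST.1ᶜ, (ν (binSet y x ST i)).toReal
      = ∏ i ∈ ST.1ᶜ, (if i ∈ ST.2 then (p, Fx - p).2 else 1 - (p, Fx - p).1 - (p, Fx - p).2) := by
    refine Finset.prod_congr rfl (fun i hi => ?_)
    rw [Finset.mem_compl] at hi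
    rw [binSet, if_neg hi]
    by_cases h : i ∈ ST.2
    · rw [if_pos h, if_pos h, hIoc]
    · rw [if_neg h, if_neg h, hIoi]
      ring
  rw [h1, h2]
  have h3 : p ^ ST.1.card = p ^ r * p ^ (ST.1.card - r) := by
    rw [← pow_add]
    congr 1
    omega
  rw [h3, mul_assoc]

/-- For an absolutely continuous distribution supported on `[0,∞)` with `inf` of support `0`,
the conditional c.d.f. of the `s`-th order statistic given `{ε₍ᵣ₎ ≤ y}` converges, as
`y ↓ 0`, to the c.d.f. of the `(s−r)`-th order statistic of a sample of size `n−r`. -/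
theorem stmt11 {Ω : Type*} [MeasurableSpace Ω] (μ : Measure Ω) [IsProbabilityMeasure μ]
    (ν : Measure ℝ) [IsProbabilityMeasure ν] (hac : ν ≪ volume)
    (hsupp : ν (Set.Iio 0) = 0) (hinf : ∀ y : ℝ, 0 < y → 0 < ν (Set.Iic y))
    (n r s : ℕ) (hr : 1 ≤ r) (hrs : r < s) (hsn : s ≤ n)
    (ε : Fin n → Ω → ℝ) (hmeas : ∀ i, Measurable (ε i))
    (hindep : iIndepFun ε μ)
    (hdist : ∀ i, Measure.map (ε i) μ = ν) :
    ∀ x : ℝ,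
      Filter.Tendsto
        (fun y : ℝ =>
          (μ {ω | orderStat (fun i => ε i ω) r ≤ y ∧ orderStat (fun i => ε i ω) s ≤ x}).toReal
            / (μ {ω | orderStat (fun i => ε i ω) r ≤ y}).toReal)
        (nhdsWithin 0 (Set.Ioi 0))
        (nhds (∑ k ∈ Finset.Icc (s - r) (n - r), ((n - r).choose k : ℝ) *
          (ν (Set.Iic x)).toReal ^ k * (1 - (ν (Set.Iic x)).toReal) ^ (n - r - k))) := by
  classical
  intro x
  have hrn : r ≤ n := le_trans hrs.le hsn
  have hs1 : 1 ≤ s := le_trans hr hrs.le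
  by_cases hx : 0 < x
  · -- main case
    set Fx : ℝ := (ν (Set.Iic x)).toReal with hFxdef
    set p : ℝ → ℝ := fun y => (ν (Set.Iic y)).toReal with hpdef
    set PN : ℕ → Prop := fun b => s ≤ b with hPN
    set PD : ℕ → Prop := fun _ => True with hPD
    -- limit of p
    have hIic0 : ν (Set.Iic 0) = 0 := by
      rw [← Set.Iio_union_right]
      exact measure_union_null hsupp (hac (by simp))
    have hp0 : Filter.Tendsto p (nhdsWithin 0 (Set.Ioi 0)) (nhds 0) := by
      have hpc : p = (cdf ν : ℝ → ℝ) := by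
        funext y
        rw [cdf_eq_real, measureReal_def]
      have h0 : (cdf ν : ℝ → ℝ) 0 = 0 := by
        rw [cdf_eq_real, measureReal_def, hIic0, ENNReal.toReal_zero]
      have := ((cdf ν).right_continuous 0).tendsto
      rw [h0] at this
      rw [hpc]
      exact this.mono_left (nhdsWithin_mono 0 (Set.Ioi_subset_Ici le_rfl))
    have htup : Filter.Tendsto (fun y => (p y, Fx - p y)) (nhdsWithin 0 (Set.Ioi 0))
        (nhds (0, Fx)) := by
      have h2 : Filter.Tendsto (fun y => Fx - p y) (nhdsWithin 0 (Set.Ioi 0)) (nhds Fx) := by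
        have := (tendsto_const_nhds (x := Fx)).sub hp0
        rwa [sub_zero] at this
      exact hp0.prodMk_nhds h2
    have hGNt : Filter.Tendsto (fun y => Gfun n r PN (p y, Fx - p y))
        (nhdsWithin 0 (Set.Ioi 0)) (nhds (Gfun n r PN (0, Fx))) :=
      ((Gfun_continuous n r PN).tendsto _).comp htup
    have hGDt : Filter.Tendsto (fun y => Gfun n r PD (p y, Fx - p y))
        (nhdsWithin 0 (Set.Ioi 0)) (nhds (Gfun n r PD (0, Fx))) :=
      ((Gfun_continuous n r PD).tendsto _).comp htup
    -- values at the limit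
    have hGN0 : Gfun n r PN (0, Fx) = (n.choose r : ℝ) *
        ∑ k ∈ Finset.Icc (s - r) (n - r),
          ((n - r).choose k : ℝ) * Fx ^ k * (1 - Fx) ^ (n - r - k) := by
      rw [Gfun_eval0]
      congr 1
      apply Finset.sum_congr
      · ext k
        simp only [Finset.mem_filter, Finset.mem_range, Finset.mem_Icc, hPN]
        omega
      · intro k _; rfl
    have hGD0 : Gfun n r PD (0, Fx) = (n.choose r : ℝ) := by
      rw [Gfun_eval0]
      have hfil : (Finset.range (n - r + 1)).filter (fun k => PD (r + k))
          = Finset.range (n - r + 1) := Finset.filter_true_of_mem (fun _ _ => trivial)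
      rw [hfil]
      have hsum : ∑ k ∈ Finset.range (n - r + 1),
          ((n - r).choose k : ℝ) * Fx ^ k * (1 - Fx) ^ (n - r - k) = 1 := by
        have hap := add_pow Fx (1 - Fx) (n - r)
        have h1 : Fx + (1 - Fx) = 1 := by ring
        rw [h1, one_pow] at hap
        rw [Finset.sum_congr rfl (fun k _ => by
          show ((n - r).choose k : ℝ) * Fx ^ k * (1 - Fx) ^ (n - r - k)
            = Fx ^ k * (1 - Fx) ^ (n - r - k) * ((n - r).choose k : ℝ)
          ring)]
        exact hap.symm
      rw [hsum, mul_one]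
    have hCne : (n.choose r : ℝ) ≠ 0 :=
      Nat.cast_ne_zero.mpr (Nat.choose_pos hrn).ne'
    -- eventual equality of the two functions
    have heq : ∀ᶠ y in nhdsWithin 0 (Set.Ioi 0),
        (μ {ω | orderStat (fun i => ε i ω) r ≤ y ∧ orderStat (fun i => ε i ω) s ≤ x}).toReal
          / (μ {ω | orderStat (fun i => ε i ω) r ≤ y}).toReal
        = Gfun n r PN (p y, Fx - p y) / Gfun n r PD (p y, Fx - p y) := by
      filter_upwards [Ioo_mem_nhdsGT_of_mem (Set.left_mem_Ico.mpr hx)] with y hy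
      have hy0 : 0 < y := hy.1
      have hyx : y ≤ x := hy.2.le
      have hppos : 0 < p y :=
        ENNReal.toReal_pos (hinf y hy0).ne' (measure_ne_top ν _)
      have hE1 : {ω | orderStat (fun i => ε i ω) r ≤ y ∧ orderStat (fun i => ε i ω) s ≤ x}
          = {ω | r ≤ (Finset.univ.filter (fun i => ε i ω ≤ y)).card ∧
              PN (Finset.univ.filter (fun i => ε i ω ≤ x)).card} := by
        ext ω
        simp only [Set.mem_setOf_eq, hPN]
        rw [orderStat_le_iff _ hr hrn, orderStat_le_iff _ hs1 hsn]
      have hE2 : {ω | orderStat (fun i => ε i ω) r ≤ y}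
          = {ω | r ≤ (Finset.univ.filter (fun i => ε i ω ≤ y)).card ∧
              PD (Finset.univ.filter (fun i => ε i ω ≤ x)).card} := by
        ext ω
        simp only [Set.mem_setOf_eq, hPD, and_true]
        rw [orderStat_le_iff _ hr hrn]
      rw [hE1, hE2,
        measure_toReal μ ν ε hmeas hindep hdist r hyx PN,
        measure_toReal μ ν ε hmeas hindep hdist r hyx PD]
      exact mul_div_mul_left _ _ (pow_ne_zero r hppos.ne')
    have hdiv : Filter.Tendsto
        (fun y => Gfun n r PN (p y, Fx - p y) / Gfun n r PD (p y, Fx - p y))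
        (nhdsWithin 0 (Set.Ioi 0))
        (nhds (Gfun n r PN (0, Fx) / Gfun n r PD (0, Fx))) :=
      hGNt.div hGDt (by rw [hGD0]; exact hCne)
    have hval : Gfun n r PN (0, Fx) / Gfun n r PD (0, Fx)
        = ∑ k ∈ Finset.Icc (s - r) (n - r),
            ((n - r).choose k : ℝ) * Fx ^ k * (1 - Fx) ^ (n - r - k) := by
      rw [hGN0, hGD0]
      exact mul_div_cancel_left₀ _ hCne
    rw [hval] at hdiv
    have heq' : (fun y => Gfun n r PN (p y, Fx - p y) / Gfun n r PD (p y, Fx - p y))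
        =ᶠ[nhdsWithin 0 (Set.Ioi 0)]
        (fun y : ℝ =>
          (μ {ω | orderStat (fun i => ε i ω) r ≤ y ∧ orderStat (fun i => ε i ω) s ≤ x}).toReal
            / (μ {ω | orderStat (fun i => ε i ω) r ≤ y}).toReal) :=
      heq.mono fun y hy => hy.symm
    exact hdiv.congr' heq'
  · -- degenerate case x ≤ 0
    push_neg at hx
    have hFx0 : ν (Set.Iic x) = 0 := by
      have hsub : Set.Iic x ⊆ Set.Iio 0 ∪ {x} := by
        intro z hz
        rcases lt_or_eq_of_le (Set.mem_Iic.mp hz) with h | h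
        · exact Or.inl (lt_of_lt_of_le h hx)
        · exact Or.inr h
      exact measure_mono_null hsub (measure_union_null hsupp (hac (by simp)))
    have hnum : ∀ y : ℝ,
        μ {ω | orderStat (fun i => ε i ω) r ≤ y ∧ orderStat (fun i => ε i ω) s ≤ x} = 0 := by
      intro y
      have hsub : {ω | orderStat (fun i => ε i ω) r ≤ y ∧ orderStat (fun i => ε i ω) s ≤ x}
          ⊆ ⋃ i, ε i ⁻¹' Set.Iic x := by
        rintro ω ⟨_, h2⟩
        rw [orderStat_le_iff _ hs1 hsn] at h2
        obtain ⟨i, hi⟩ := Finset.card_pos.mp (lt_of_lt_of_le (by omega) h2)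
        simp only [Finset.mem_filter] at hi
        exact Set.mem_iUnion.mpr ⟨i, hi.2⟩
      refine measure_mono_null hsub (measure_iUnion_null fun i => ?_)
      rw [← Measure.map_apply (hmeas i) measurableSet_Iic, hdist i]
      exact hFx0
    have hzero : ∀ k ∈ Finset.Icc (s - r) (n - r),
        ((n - r).choose k : ℝ) * (ν (Set.Iic x)).toReal ^ k *
          (1 - (ν (Set.Iic x)).toReal) ^ (n - r - k) = 0 := by
      intro k hk
      rw [Finset.mem_Icc] at hk
      have hk0 : k ≠ 0 := by omega
      rw [hFx0, ENNReal.toReal_zero, zero_pow hk0, mul_zero, zero_mul]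
    rw [Finset.sum_eq_zero hzero]
    have : (fun y : ℝ =>
        (μ {ω | orderStat (fun i => ε i ω) r ≤ y ∧ orderStat (fun i => ε i ω) s ≤ x}).toReal
          / (μ {ω | orderStat (fun i => ε i ω) r ≤ y}).toReal) = fun _ => (0:ℝ) := by
      funext y
      rw [hnum y, ENNReal.toReal_zero, zero_div]
    rw [this]
    exact tendsto_const_nhds
end

section
/- Let G(x) = 1 − e^{−x}[1 + π^{−2}(1 − cos 2πx)] for x ≥ 0 and G(x) = 0 for x < 0. Then G is a cumulative distribution function: it is nondecreasing, right-continuous, G(0) = 0, and G(x) → 1 as x → ∞. -/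
open Real Set Filter

/-- Rossberg's counterexample distribution function. -/
noncomputable def rossbergG (x : ℝ) : ℝ :=
  if x < 0 then 0
  else 1 - Real.exp (-x) * (1 + (Real.pi ^ 2)⁻¹ * (1 - Real.cos (2 * Real.pi * x)))

noncomputable def rossF (x : ℝ) : ℝ :=
  1 - Real.exp (-x) * (1 + (Real.pi ^ 2)⁻¹ * (1 - Real.cos (2 * Real.pi * x)))

lemma rossF_hasDerivAt (x : ℝ) :
    HasDerivAt rossF
      (Real.exp (-x) * (1 + (Real.pi ^ 2)⁻¹ * (1 - Real.cos (2 * Real.pi * x)))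
        - Real.exp (-x) * ((Real.pi ^ 2)⁻¹ * (Real.sin (2 * Real.pi * x) * (2 * Real.pi)))) x := by
  have h1 : HasDerivAt (fun x : ℝ => Real.exp (-x)) (Real.exp (-x) * (-1)) x := by
    simpa using ((hasDerivAt_id x).neg).exp
  have h2 : HasDerivAt (fun x : ℝ => Real.cos (2 * Real.pi * x))
      (-Real.sin (2 * Real.pi * x) * (2 * Real.pi)) x := by
    simpa using ((hasDerivAt_id x).const_mul (2 * Real.pi)).cos
  have h3 : HasDerivAt (fun x : ℝ => 1 + (Real.pi ^ 2)⁻¹ * (1 - Real.cos (2 * Real.pi * x)))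
      ((Real.pi ^ 2)⁻¹ * (Real.sin (2 * Real.pi * x) * (2 * Real.pi))) x := by
    have := ((h2.const_sub 1).const_mul ((Real.pi ^ 2)⁻¹)).const_add 1
    refine this.congr_deriv ?_
    ring
  have := (h1.mul h3).const_sub 1
  refine this.congr_deriv ?_
  ring

lemma rossF_deriv_pos (x : ℝ) : 0 < deriv rossF x := by
  rw [(rossF_hasDerivAt x).deriv]
  have hexp : 0 < Real.exp (-x) := Real.exp_pos _
  have hsin : Real.sin (2 * Real.pi * x) ≤ 1 := Real.sin_le_one _
  have hcos : Real.cos (2 * Real.pi * x) ≤ 1 := Real.cos_le_one _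
  have hpi : (3 : ℝ) < Real.pi := Real.pi_gt_three
  have hc : (0 : ℝ) < (Real.pi ^ 2)⁻¹ := by positivity
  have hce : (Real.pi ^ 2)⁻¹ * Real.pi ^ 2 = 1 := by
    field_simp
  have key : 0 < (1 + (Real.pi ^ 2)⁻¹ * (1 - Real.cos (2 * Real.pi * x)))
      - (Real.pi ^ 2)⁻¹ * (Real.sin (2 * Real.pi * x) * (2 * Real.pi)) := by
    nlinarith [mul_pos hc (mul_pos (by linarith : (0:ℝ) < Real.pi) (by linarith : (0:ℝ) < Real.pi - 2)),
      mul_nonneg hc.le (by linarith : (0:ℝ) ≤ 1 - Real.cos (2 * Real.pi * x)),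
      mul_le_mul_of_nonneg_left (mul_le_mul_of_nonneg_right hsin (by linarith : (0:ℝ) ≤ 2 * Real.pi)) hc.le]
  nlinarith [mul_pos hexp key]

lemma rossF_mono : StrictMono rossF := by
  exact strictMono_of_deriv_pos rossF_deriv_pos

lemma rossF_zero : rossF 0 = 0 := by
  simp [rossF]

lemma rossG_eq (x : ℝ) : rossbergG x = max (rossF x) 0 := by
  unfold rossbergG
  split_ifs with h
  · have : rossF x ≤ 0 := by
      rw [← rossF_zero]; exact (rossF_mono.le_iff_le.mpr h.le)
    simp [max_eq_right this]
  · have : 0 ≤ rossF x := by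
      rw [← rossF_zero]; exact rossF_mono.le_iff_le.mpr (not_lt.mp h)
    rw [max_eq_left this]; rfl

lemma rossF_cont : Continuous rossF := by
  unfold rossF; continuity

/-- `rossbergG` is a cumulative distribution function: nondecreasing, right-continuous,
`G(0) = 0`, and `G(x) → 1` as `x → ∞`. -/
theorem stmt15 :
    Monotone rossbergG ∧
    (∀ x : ℝ, ContinuousWithinAt rossbergG (Set.Ici x) x) ∧
    rossbergG 0 = 0 ∧
    Filter.Tendsto rossbergG Filter.atTop (nhds 1) := by
  have hGeq : rossbergG = fun x => max (rossF x) 0 := funext rossG_eq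
  have hGc : Continuous rossbergG := by
    rw [hGeq]; exact rossF_cont.max continuous_const
  refine ⟨?_, fun x => hGc.continuousWithinAt, ?_, ?_⟩
  · rw [hGeq]
    exact (rossF_mono.monotone).max monotone_const
  · simp [rossbergG, rossF_zero]
  · rw [hGeq]
    have hf : Tendsto rossF atTop (nhds 1) := by
      have h0 : Tendsto (fun x : ℝ => Real.exp (-x) * (1 + (Real.pi ^ 2)⁻¹ * (1 - Real.cos (2 * Real.pi * x)))) atTop (nhds 0) := by
        refine squeeze_zero (g := fun x : ℝ => Real.exp (-x) * 2) ?_ ?_ ?_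
        · intro t
          have hc : (0 : ℝ) < (Real.pi ^ 2)⁻¹ := by positivity
          have h2 : (0:ℝ) ≤ 1 - Real.cos (2 * Real.pi * t) := by
            nlinarith [Real.cos_le_one (2 * Real.pi * t)]
          have : (0:ℝ) ≤ 1 + (Real.pi ^ 2)⁻¹ * (1 - Real.cos (2 * Real.pi * t)) := by positivity
          exact mul_nonneg (Real.exp_pos _).le this
        · intro t
          have hc : (0 : ℝ) < (Real.pi ^ 2)⁻¹ := by positivity
          have h1 : (Real.pi ^ 2)⁻¹ ≤ 1 / 2 := by
            rw [inv_le_iff_one_le_mul₀ (by positivity)]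
            nlinarith [Real.pi_gt_three]
          have h2 : 1 - Real.cos (2 * Real.pi * t) ≤ 2 := by
            nlinarith [Real.neg_one_le_cos (2 * Real.pi * t)]
          have h3 : 1 + (Real.pi ^ 2)⁻¹ * (1 - Real.cos (2 * Real.pi * t)) ≤ 2 := by
            nlinarith [mul_nonneg hc.le (by nlinarith [Real.cos_le_one (2 * Real.pi * t)] : (0:ℝ) ≤ 1 - Real.cos (2 * Real.pi * t))]
          exact mul_le_mul_of_nonneg_left h3 (Real.exp_pos _).le
        · have := Real.tendsto_exp_neg_atTop_nhds_zero
          simpa using this.mul_const 2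
      have := h0.const_sub 1
      simp only [sub_zero] at this; exact this
    have : Tendsto (fun x => max (rossF x) 0) atTop (nhds (max 1 0)) :=
      (hf.max tendsto_const_nhds)
    simpa using this
end
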